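/- Let f : M → M be a measurable transformation on a measurable space, μ an f-invariant probability, and ν a probability with a Jacobian J_ν f with respect to f. Suppose L is a bounded measurable function with L_φ*ν = λν for the transfer operator with Hölder potential φ, where f is a local diffeomorphism with each point having exactly k preimages. Then the Jacobian of ν with respect to f satisfies J_ν f = λ·e^{−φ} ν-almost everywhere; i.e., for every measurable set A on which f is injective, ν(f(A)) = ∫_A λ·e^{−φ(x)} dν(x). -/

import Mathlib

open MeasureTheory
open scoped ENNReal NNReal

theorem jacobian_of_eigenmeasure
    {M : Type*} [MetricSpace M] [CompactSpace M] [MeasurableSpace M] [BorelSpace M]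
    (f : M → M) (hf : Continuous f) (k : ℕ) (hk : 0 < k)
    (branch : Fin k → M → M) (hbc : ∀ i, Continuous (branch i))
    (hbr : ∀ i x, f (branch i x) = x)
    (hfiber : ∀ x y, f y = x → ∃ i, branch i x = y)
    (hinj : ∀ x, Function.Injective (fun i => branch i x))
    (φ : M → ℝ) (hφ : Continuous φ)
    (ν : Measure M) [IsProbabilityMeasure ν]
    (lam : ℝ) (hlam : 0 < lam)
    (heig : ∀ g : M → ℝ, Continuous g →
      ∫ x, (∑ i : Fin k, Real.exp (φ (branch i x)) * g (branch i x)) ∂ν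
        = lam * ∫ x, g x ∂ν) :
    ∀ A : Set M, MeasurableSet A → Set.InjOn f A →
      (ν (f '' A)).toReal = ∫ x in A, lam * Real.exp (-φ x) ∂ν := by
  classical
  -- integrability of continuous functions
  have hintC : ∀ g : M → ℝ, Continuous g → Integrable g ν := by
    intro g hg
    have hcs : HasCompactSupport g :=
      IsCompact.of_isClosed_subset isCompact_univ (isClosed_tsupport g) (Set.subset_univ _)
    exact hg.integrable_of_hasCompactSupport hcs
  -- the transfer measure
  set w : M → ℝ≥0∞ := fun y => ENNReal.ofReal (Real.exp (φ y)) with hw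
  have hwmeas : Measurable w := by
    exact (ENNReal.measurable_ofReal.comp (Real.continuous_exp.comp hφ).measurable)
  set m : Measure M := ∑ i : Fin k, (ν.map (branch i)).withDensity w with hmdef
  have hm_lint : ∀ h : M → ℝ≥0∞, Measurable h →
      ∫⁻ x, h x ∂m
        = ∫⁻ x, ∑ j : Fin k, w (branch j x) * h (branch j x) ∂ν := by
    intro h hh
    rw [hmdef, lintegral_finset_sum_measure]
    have : ∀ j : Fin k,
        ∫⁻ x, h x ∂((ν.map (branch j)).withDensity w)
          = ∫⁻ x, w (branch j x) * h (branch j x) ∂ν := by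
      intro j
      rw [lintegral_withDensity_eq_lintegral_mul _ hwmeas hh]
      simp only [Pi.mul_apply]
      exact lintegral_map (hwmeas.mul hh) (hbc j).measurable
    simp_rw [this]
    rw [lintegral_finset_sum]
    intro j _
    exact (hwmeas.comp (hbc j).measurable).mul (hh.comp (hbc j).measurable)
  -- the eigen-equation as a measure identity
  have hm : (lam.toNNReal : ℝ≥0) • ν = m := by
    apply ext_of_forall_lintegral_eq_of_IsFiniteMeasure
    intro fb
    have hfbceq : ∀ y, ((fb y : ℝ≥0) : ℝ≥0∞) = ENNReal.ofReal ((fb y : ℝ)) := by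
      intro y; simp [ENNReal.ofReal_coe_nnreal]
    have hgc : Continuous fun x => ((fb x : ℝ≥0) : ℝ) :=
      NNReal.continuous_coe.comp fb.continuous
    have hstep := hm_lint (fun y => ((fb y : ℝ≥0) : ℝ≥0∞)) fb.measurable_coe_ennreal_comp
    rw [hstep]
    have hpt : ∀ x, (∑ j : Fin k, w (branch j x) * ((fb (branch j x) : ℝ≥0) : ℝ≥0∞))
        = ENNReal.ofReal (∑ j : Fin k, Real.exp (φ (branch j x)) * (fb (branch j x) : ℝ)) := by
      intro x
      rw [ENNReal.ofReal_sum_of_nonneg (fun j _ =>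
        mul_nonneg (Real.exp_nonneg _) (fb (branch j x)).coe_nonneg)]
      refine Finset.sum_congr rfl fun j _ => ?_
      rw [ENNReal.ofReal_mul (Real.exp_nonneg _), hfbceq]
    simp_rw [hpt]
    have hsumc : Continuous fun x => ∑ j : Fin k, Real.exp (φ (branch j x)) * (fb (branch j x) : ℝ) := by
      exact continuous_finset_sum _ fun j _ =>
        ((Real.continuous_exp.comp (hφ.comp (hbc j))).mul (hgc.comp (hbc j)))
    rw [← ofReal_integral_eq_lintegral_ofReal (hintC _ hsumc)
      (Filter.Eventually.of_forall fun x => Finset.sum_nonneg fun j _ =>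
        mul_nonneg (Real.exp_nonneg _) (fb (branch j x)).coe_nonneg)]
    rw [heig _ hgc, ENNReal.ofReal_mul hlam.le,
      ofReal_integral_eq_lintegral_ofReal (hintC _ hgc)
        (Filter.Eventually.of_forall fun x => (fb x).coe_nonneg)]
    rw [ENNReal.smul_def, lintegral_smul_measure]
    simp_rw [hfbceq]
    rfl
  intro A hA hAinj
  set Ai : Fin k → Set M := fun i => A ∩ {y | branch i (f y) = y} with hAidef
  have hAimeas : ∀ i, MeasurableSet (Ai i) := fun i =>
    hA.inter (isClosed_eq ((hbc i).comp hf) continuous_id).measurableSet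
  have hmem : ∀ (j i : Fin k) (x : M), branch j x ∈ Ai i ↔ j = i ∧ branch i x ∈ A := by
    intro j i x
    constructor
    · rintro ⟨hA', hC'⟩
      have h1 : branch i x = branch j x := by
        have h2 : branch i (f (branch j x)) = branch j x := hC'
        rwa [hbr j x] at h2
      have hij : i = j := hinj x h1
      exact ⟨hij.symm, h1 ▸ hA'⟩
    · rintro ⟨rfl, hA'⟩
      exact ⟨hA', by show branch j (f (branch j x)) = branch j x; rw [hbr]⟩
  have hcover : A = ⋃ i, Ai i := by
    ext y; constructor
    · intro hy
      obtain ⟨i, hi⟩ := hfiber (f y) y rfl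
      exact Set.mem_iUnion.2 ⟨i, hy, hi⟩
    · intro hy
      obtain ⟨i, hi⟩ := Set.mem_iUnion.1 hy
      exact hi.1
  have hdisj : Pairwise (Function.onFun Disjoint Ai) := by
    intro i j hij
    refine Set.disjoint_left.2 fun y hyi hyj => hij ?_
    exact hinj (f y) (hyi.2.trans hyj.2.symm)
  have himg : f '' A = ⋃ i, (branch i) ⁻¹' (Ai i) := by
    ext x; constructor
    · rintro ⟨y, hy, rfl⟩
      obtain ⟨i, hi⟩ := hfiber (f y) y rfl
      refine Set.mem_iUnion.2 ⟨i, ?_⟩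
      show branch i (f y) ∈ Ai i
      rw [hi]
      exact ⟨hy, hi⟩
    · intro hx
      obtain ⟨i, hi⟩ := Set.mem_iUnion.1 hx
      exact ⟨branch i x, hi.1, hbr i x⟩
  have hpredisj : Pairwise (Function.onFun Disjoint fun i => (branch i) ⁻¹' (Ai i)) := by
    intro i j hij
    refine Set.disjoint_left.2 fun x hxi hxj => hij ?_
    have h1 : branch i x = branch j x := hAinj hxi.1 hxj.1 (by rw [hbr, hbr])
    exact hinj x h1
  have hpremeas : ∀ i, MeasurableSet ((branch i) ⁻¹' (Ai i)) := fun i =>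
    (hAimeas i).preimage (hbc i).measurable
  have hkey : ∀ i, ν ((branch i) ⁻¹' (Ai i))
      = (lam.toNNReal : ℝ≥0∞) * ∫⁻ x in Ai i, ENNReal.ofReal (Real.exp (-φ x)) ∂ν := by
    intro i
    set h : M → ℝ≥0∞ := (Ai i).indicator (fun y => ENNReal.ofReal (Real.exp (-φ y))) with hhdef
    have hhm : Measurable h :=
      Measurable.indicator (ENNReal.measurable_ofReal.comp
        (Real.continuous_exp.comp hφ.neg).measurable) (hAimeas i)
    have h1 := hm_lint h hhm
    rw [← hm, ENNReal.smul_def, lintegral_smul_measure, hhdef,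
      lintegral_indicator (hAimeas i) _] at h1
    have hpt : ∀ x, (∑ j : Fin k, w (branch j x) * h (branch j x))
        = Set.indicator ((branch i) ⁻¹' (Ai i)) 1 x := by
      intro x
      rw [Finset.sum_eq_single i]
      · by_cases hx : branch i x ∈ Ai i
        · rw [hhdef]
          simp only [Set.indicator_of_mem hx]
          rw [Set.indicator_of_mem (show x ∈ (branch i) ⁻¹' (Ai i) from hx)]
          show ENNReal.ofReal (Real.exp (φ (branch i x)))
            * ENNReal.ofReal (Real.exp (-φ (branch i x))) = 1
          rw [← ENNReal.ofReal_mul (Real.exp_nonneg _), ← Real.exp_add]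
          simp
        · rw [hhdef]
          simp [Set.indicator_of_notMem hx,
            Set.indicator_of_notMem (show x ∉ (branch i) ⁻¹' (Ai i) from hx)]
      · intro j _ hji
        have hni : branch j x ∉ Ai i := fun hc => hji ((hmem j i x).1 hc).1
        rw [hhdef]
        simp [Set.indicator_of_notMem hni]
      · intro hcon
        exact absurd (Finset.mem_univ i) hcon
    simp_rw [hhdef] at hpt; simp_rw [hpt] at h1
    rw [lintegral_indicator_one (hpremeas i)] at h1
    exact h1.symm
  have hsum : ν (f '' A)
      = (lam.toNNReal : ℝ≥0∞) * ∫⁻ x in A, ENNReal.ofReal (Real.exp (-φ x)) ∂ν := by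
    rw [himg, measure_iUnion hpredisj hpremeas, tsum_fintype]
    simp_rw [hkey]
    rw [← Finset.mul_sum]
    congr 1
    conv_rhs => rw [hcover]
    rw [lintegral_iUnion hAimeas hdisj, tsum_fintype]
  have hne : Nonempty M := by
    by_contra hcon
    rw [not_nonempty_iff] at hcon
    have h1 : ν Set.univ = 1 := measure_univ
    rw [Set.univ_eq_empty_iff.2 hcon, measure_empty] at h1
    exact zero_ne_one h1
  haveI := hne
  obtain ⟨x0, -, hx0⟩ := isCompact_univ.exists_isMaxOn Set.univ_nonempty
    (Real.continuous_exp.comp hφ.neg).continuousOn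
  have hfin : ∫⁻ x in A, ENNReal.ofReal (Real.exp (-φ x)) ∂ν ≠ ⊤ := by
    have hle : ∫⁻ x in A, ENNReal.ofReal (Real.exp (-φ x)) ∂ν
        ≤ ENNReal.ofReal (Real.exp (-φ x0)) * ν A := by
      calc ∫⁻ x in A, ENNReal.ofReal (Real.exp (-φ x)) ∂ν
          ≤ ∫⁻ _x in A, ENNReal.ofReal (Real.exp (-φ x0)) ∂ν :=
            lintegral_mono fun x => ENNReal.ofReal_le_ofReal (hx0 (Set.mem_univ x))
        _ = ENNReal.ofReal (Real.exp (-φ x0)) * ν A := by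
            rw [setLIntegral_const]
    exact ne_top_of_le_ne_top (ENNReal.mul_ne_top ENNReal.ofReal_ne_top (measure_ne_top ν A)) hle
  rw [hsum, ENNReal.toReal_mul]
  have hlamt : ((lam.toNNReal : ℝ≥0∞)).toReal = lam := by
    simp [Real.coe_toNNReal _ hlam.le]
  rw [hlamt, integral_const_mul]
  congr 1
  rw [integral_eq_lintegral_of_nonneg_ae (f := fun x => Real.exp (-φ x))
    (Filter.Eventually.of_forall fun x => Real.exp_nonneg _)
    (Real.continuous_exp.comp hφ.neg).aestronglyMeasurable]
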